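/- Let (Γ, 𝔞, θ, δ, f) be a Γ-Lie bialgebra and let A = U(𝔞) ⋊ Γ. Define δ_A on generators by δ_A([x]) = [δ(x)] for x ∈ 𝔞 and δ_A([γ]) = −[f_γ]·([γ] ⊗ [γ]) for γ ∈ Γ. Then δ_A([γγ']) computed from the multiplicativity requirement δ_A(ab) = δ_A(a)·Δ(b) + Δ(a)·δ_A(b) is consistent: δ_A([γ])·Δ([γ']) + Δ([γ])·δ_A([γ']) = −[f_{γγ'}]·([γγ'] ⊗ [γγ']), using the cocycle identity f_{γγ'} = f_γ + Λ²(θ_γ)(f_{γ'}). -/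

import Mathlib

open TensorProduct

attribute [local instance 100] LieRing.ofAssociativeRing

/-- A bialgebra structure on a `k`-module `A`, given by explicit structure maps:
an associative unital product, a coassociative counital coproduct which is an
algebra morphism. -/
structure BialgStr (k : Type) [CommRing k] (A : Type) [AddCommGroup A] [Module k A] where
  mul : A →ₗ[k] A →ₗ[k] A
  one : A
  comul : A →ₗ[k] A ⊗[k] A
  counit : A →ₗ[k] k
  mul_assoc' : ∀ x y z : A, mul (mul x y) z = mul x (mul y z)
  one_mul' : ∀ x : A, mul one x = x
  mul_one' : ∀ x : A, mul x one = x
  coassoc' : ∀ x : A, (TensorProduct.assoc k A A A)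
      ((TensorProduct.map comul LinearMap.id) (comul x)) =
    (TensorProduct.map LinearMap.id comul) (comul x)
  counit_left' : ∀ x : A,
    (TensorProduct.lid k A) ((TensorProduct.map counit LinearMap.id) (comul x)) = x
  counit_right' : ∀ x : A,
    (TensorProduct.rid k A) ((TensorProduct.map LinearMap.id counit) (comul x)) = x
  comul_mul' : ∀ x y : A, comul (mul x y) = TensorProduct.map₂ mul mul (comul x) (comul y)
  comul_one' : comul one = one ⊗ₜ one
  counit_mul' : ∀ x y : A, counit (mul x y) = counit x * counit y
  counit_one' : counit one = 1

/-- The linear embedding `U(a) → U(a) ⊗ kΓ`, `u ↦ u ⊗ single γ 1`, whose range is the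
`γ`-component of the `Γ`-grading. -/
noncomputable def jR (k : Type) [Field k] (a : Type) [LieRing a] [LieAlgebra k a]
    (Γ : Type) [Group Γ] (γ : Γ) :
    UniversalEnvelopingAlgebra k a →ₗ[k]
      (UniversalEnvelopingAlgebra k a) ⊗[k] (MonoidAlgebra k Γ) :=
  (TensorProduct.mk k (UniversalEnvelopingAlgebra k a) (MonoidAlgebra k Γ)).flip
    (MonoidAlgebra.single γ 1)

/-- The canonical map `x ↦ [x] = ι(x) ⊗ 1` from `a` to `U(a) ⊗ kΓ`. -/
noncomputable def jx (k : Type) [Field k] (a : Type) [LieRing a] [LieAlgebra k a]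
    (Γ : Type) [Group Γ] :
    a →ₗ[k] (UniversalEnvelopingAlgebra k a) ⊗[k] (MonoidAlgebra k Γ) :=
  (jR k a Γ 1) ∘ₗ (UniversalEnvelopingAlgebra.ι k (L := a)).toLinearMap

/-- The extension of a Lie algebra automorphism of `a` to an algebra endomorphism of `U(a)`. -/
noncomputable def extendAut (k : Type) [Field k] (a : Type) [LieRing a] [LieAlgebra k a]
    (θ : a ≃ₗ⁅k⁆ a) :
    UniversalEnvelopingAlgebra k a →ₐ[k] UniversalEnvelopingAlgebra k a :=
  UniversalEnvelopingAlgebra.lift k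
    ((UniversalEnvelopingAlgebra.ι k (L := a)).comp θ.toLieHom)

/-- `δ_A([γ]) = −[f_γ]·([γ] ⊗ [γ])` in `A ⊗ A`, where `A = U(a) ⋊ Γ` and
`[w]` for `w ∈ Λ²a` denotes its image in `A ⊗ A`. -/
noncomputable def deltaA (k : Type) [Field k] (a : Type) [LieRing a] [LieAlgebra k a]
    (Γ : Type) [Group Γ]
    (B : BialgStr k ((UniversalEnvelopingAlgebra k a) ⊗[k] (MonoidAlgebra k Γ)))
    (f : Γ → a ⊗[k] a) (γ : Γ) :
    ((UniversalEnvelopingAlgebra k a) ⊗[k] (MonoidAlgebra k Γ)) ⊗[k]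
      ((UniversalEnvelopingAlgebra k a) ⊗[k] (MonoidAlgebra k Γ)) :=
  -(TensorProduct.map₂ B.mul B.mul
      ((TensorProduct.map (jx k a Γ) (jx k a Γ)) (f γ))
      ((jR k a Γ γ 1) ⊗ₜ (jR k a Γ γ 1)))

set_option maxHeartbeats 1000000
set_option synthInstance.maxHeartbeats 200000

/-- consistency of the co-Poisson structure on `U(a) ⋊ Γ` on group elements:
`δ_A([γ])·Δ([γ']) + Δ([γ])·δ_A([γ']) = −[f_{γγ'}]·([γγ'] ⊗ [γγ'])`, using the cocycle
identity `f_{γγ'} = f_γ + Λ²(θ_γ)(f_{γ'})`. -/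
theorem coPoisson_consistency_on_group_elements
    (k : Type) [Field k] [CharZero k] (a : Type) [LieRing a] [LieAlgebra k a]
    (Γ : Type) [Group Γ]
    (θ : Γ → (a ≃ₗ⁅k⁆ a)) (hθ : ∀ γ γ' : Γ, ∀ x : a, θ (γ * γ') x = θ γ (θ γ' x))
    (f : Γ → a ⊗[k] a)
    (hcoc : ∀ γ γ' : Γ, f (γ * γ') = f γ +
      TensorProduct.map (θ γ).toLieHom.toLinearMap (θ γ).toLieHom.toLinearMap (f γ'))
    (B : BialgStr k ((UniversalEnvelopingAlgebra k a) ⊗[k] (MonoidAlgebra k Γ)))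
    (hmul : ∀ (u u' : UniversalEnvelopingAlgebra k a) (γ γ' : Γ),
      B.mul (jR k a Γ γ u) (jR k a Γ γ' u') = jR k a Γ (γ * γ') (u * extendAut k a (θ γ) u')) :
    ∀ γ γ' : Γ,
      TensorProduct.map₂ B.mul B.mul (deltaA k a Γ B f γ) ((jR k a Γ γ' 1) ⊗ₜ (jR k a Γ γ' 1)) +
        TensorProduct.map₂ B.mul B.mul ((jR k a Γ γ 1) ⊗ₜ (jR k a Γ γ 1))
          (deltaA k a Γ B f γ') =
      deltaA k a Γ B f (γ * γ') := by
  intro γ γ'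
  have hjx : ∀ x : a, jx k a Γ x = jR k a Γ 1 (UniversalEnvelopingAlgebra.ι k x) := fun _ => rfl
  have hext : ∀ (θ₀ : a ≃ₗ⁅k⁆ a) (x : a),
      extendAut k a θ₀ (UniversalEnvelopingAlgebra.ι k x)
        = UniversalEnvelopingAlgebra.ι k (θ₀ x) := fun θ₀ x =>
    UniversalEnvelopingAlgebra.lift_ι_apply k
      ((UniversalEnvelopingAlgebra.ι k (L := a)).comp θ₀.toLieHom) x
  have h1 : ∀ (x : a) (c : Γ), B.mul (jx k a Γ x) (jR k a Γ c 1)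
      = jR k a Γ c (UniversalEnvelopingAlgebra.ι k x) := by
    intro x c
    rw [hjx, hmul, one_mul, map_one, mul_one]
  have h3 : ∀ (u : UniversalEnvelopingAlgebra k a) (c d : Γ),
      B.mul (jR k a Γ c u) (jR k a Γ d 1) = jR k a Γ (c * d) u := by
    intro u c d
    rw [hmul, map_one, mul_one]
  have h4 : ∀ (x : a) (c d : Γ),
      B.mul (jR k a Γ c 1) (jR k a Γ d (UniversalEnvelopingAlgebra.ι k x))
        = jR k a Γ (c * d) (UniversalEnvelopingAlgebra.ι k (θ c x)) := by
    intro x c d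
    rw [hmul, one_mul, hext]
  have lemA : ∀ t : a ⊗[k] a,
      TensorProduct.map₂ B.mul B.mul
        (TensorProduct.map₂ B.mul B.mul
          ((TensorProduct.map (jx k a Γ) (jx k a Γ)) t)
          ((jR k a Γ γ 1) ⊗ₜ (jR k a Γ γ 1)))
        ((jR k a Γ γ' 1) ⊗ₜ (jR k a Γ γ' 1))
      = TensorProduct.map₂ B.mul B.mul
          ((TensorProduct.map (jx k a Γ) (jx k a Γ)) t)
          ((jR k a Γ (γ * γ') 1) ⊗ₜ (jR k a Γ (γ * γ') 1)) := by
    intro t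
    induction t using TensorProduct.induction_on with
    | zero => simp only [map_zero, LinearMap.zero_apply]
    | tmul x y =>
        simp only [TensorProduct.map_tmul, TensorProduct.map₂_apply_tmul, h1, h3]
    | add s t hs ht =>
        simp only [map_add, LinearMap.add_apply, hs, ht]
  have lemB : ∀ t : a ⊗[k] a,
      TensorProduct.map₂ B.mul B.mul ((jR k a Γ γ 1) ⊗ₜ (jR k a Γ γ 1))
        (TensorProduct.map₂ B.mul B.mul
          ((TensorProduct.map (jx k a Γ) (jx k a Γ)) t)
          ((jR k a Γ γ' 1) ⊗ₜ (jR k a Γ γ' 1)))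
      = TensorProduct.map₂ B.mul B.mul
          ((TensorProduct.map (jx k a Γ) (jx k a Γ))
            (TensorProduct.map (θ γ).toLieHom.toLinearMap (θ γ).toLieHom.toLinearMap t))
          ((jR k a Γ (γ * γ') 1) ⊗ₜ (jR k a Γ (γ * γ') 1)) := by
    intro t
    induction t using TensorProduct.induction_on with
    | zero => simp only [map_zero, LinearMap.zero_apply]
    | tmul x y =>
        simp only [TensorProduct.map_tmul, TensorProduct.map₂_apply_tmul, h1, h4,
          LieHom.coe_toLinearMap]
        rfl
    | add s t hs ht =>
        simp only [map_add, LinearMap.add_apply, hs, ht]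
  have hneg1 : ∀ z w : (UniversalEnvelopingAlgebra k a ⊗[k] MonoidAlgebra k Γ) ⊗[k]
      (UniversalEnvelopingAlgebra k a ⊗[k] MonoidAlgebra k Γ),
      TensorProduct.map₂ B.mul B.mul (-z) w = -(TensorProduct.map₂ B.mul B.mul z w) := by
    intro z w
    rw [← neg_one_smul k z, (TensorProduct.map₂ B.mul B.mul).map_smul,
      LinearMap.smul_apply]
    module
  have hneg2 : ∀ w z : (UniversalEnvelopingAlgebra k a ⊗[k] MonoidAlgebra k Γ) ⊗[k]
      (UniversalEnvelopingAlgebra k a ⊗[k] MonoidAlgebra k Γ),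
      TensorProduct.map₂ B.mul B.mul w (-z) = -(TensorProduct.map₂ B.mul B.mul w z) := by
    intro w z
    rw [← neg_one_smul k z, (TensorProduct.map₂ B.mul B.mul w).map_smul]
    module
  simp only [deltaA, hcoc, map_add, LinearMap.add_apply, hneg1, hneg2, lemA, lemB]
  abel
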